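/- arXiv:2010.13328 — 3 statements merged into one kernel-verified Lean document; each statement's English description precedes it below -/
import Mathlib

section
/- For every finite σ-structure A, the tree-depth of A equals the least k > 0 such that there exists an E_k-coalgebra on A (the E-coalgebra number of A). -/
/-- A relational signature: a set of relation symbols with arities. -/
structure Signature where
  symbols : Type
  arity : symbols → ℕ

/-- A relational structure for a signature `σ`. -/
structure Struct (σ : Signature) where
  carrier : Type
  rel : ∀ r : σ.symbols, (Fin (σ.arity r) → carrier) → Prop

/-- Homomorphisms of relational structures. -/
def IsHom {σ : Signature} (A B : Struct σ) (f : A.carrier → B.carrier) : Prop :=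
  ∀ r x, A.rel r x → B.rel r (fun i => f (x i))

/-- Nonempty sequences of length at most `k`. -/
def NESeq (A : Type) (k : ℕ) : Type := { l : List A // l ≠ [] ∧ l.length ≤ k }

/-- The last element of a nonempty sequence (the counit of the EF comonad). -/
def lastOf {A : Type} {k : ℕ} (s : NESeq A k) : A := s.1.getLast s.2.1

/-- Co-Kleisli coextension for the EF comonad: `f*[a₁,…,a_j] = [f[a₁],…,f[a₁,…,a_j]]`. -/
def coext {A B : Type} {k : ℕ} (f : NESeq A k → B) (s : NESeq A k) : NESeq B k :=
  ⟨(List.finRange s.1.length).map fun i =>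
      f ⟨s.1.take (i.1 + 1), by
        have h1 := i.2
        have h2 := s.2.2
        constructor
        · apply List.ne_nil_of_length_pos
          simp [List.length_take] <;> omega
        · simp [List.length_take]; omega⟩, by
    have h1 := s.2.1
    have h2 := s.2.2
    constructor
    · apply List.ne_nil_of_length_pos
      simpa [List.length_pos_iff] using h1
    · simpa using h2⟩

/-- The Ehrenfeucht–Fraïssé comonad on structures: the universe of `EF k A` consists of
nonempty sequences of length ≤ k over `A`, and a relation holds of a tuple of sequences
iff they are pairwise prefix-comparable and the relation holds in `A` of their last
elements. -/
def EF {σ : Signature} (k : ℕ) (A : Struct σ) : Struct σ where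
  carrier := NESeq A.carrier k
  rel r x := (∀ i j, (x i).1 <+: (x j).1 ∨ (x j).1 <+: (x i).1) ∧
    A.rel r (fun i => lastOf (x i))

/-- The Gaifman graph of a structure. -/
def gaifman {σ : Signature} (A : Struct σ) (a a' : A.carrier) : Prop :=
  a ≠ a' ∧ ∃ (r : σ.symbols) (x : Fin (σ.arity r) → A.carrier) (i j : Fin (σ.arity r)),
    A.rel r x ∧ x i = a ∧ x j = a' ∧ i ≠ j

/-- `α : A → E_k A` is a coalgebra for the EF comonad: it is a homomorphism satisfying
the counit and comultiplication laws. -/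
def IsEFCoalg {σ : Signature} (k : ℕ) (A : Struct σ) (α : A.carrier → NESeq A.carrier k) : Prop :=
  IsHom A (EF k A) α ∧
  (∀ a, lastOf (α a) = a) ∧
  (∀ (a : A.carrier) (i : ℕ) (h : i < (α a).1.length),
      (α ((α a).1.get ⟨i, h⟩)).1 = (α a).1.take (i + 1))

/-- A forest cover of height ≤ k of a graph `(V, adj)`: a forest order in which the
predecessors of any element form a chain of size ≤ k, and adjacent vertices are
comparable. -/
structure ForestCover (V : Type) (adj : V → V → Prop) (k : ℕ) where
  le : V → V → Prop
  le_refl : ∀ a, le a a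
  le_antisymm : ∀ a b, le a b → le b a → a = b
  le_trans : ∀ a b c, le a b → le b c → le a c
  pred_chain : ∀ a b c, le b a → le c a → le b c ∨ le c b
  pred_finite : ∀ a, {b | le b a}.Finite
  height : ∀ a, {b | le b a}.ncard ≤ k
  cover : ∀ a b, adj a b → le a b ∨ le b a

/-- The tree-depth of a structure: the minimum height of a forest cover of its Gaifman
graph. -/
noncomputable def treeDepth {σ : Signature} (A : Struct σ) : ℕ :=
  sInf {k | Nonempty (ForestCover A.carrier (gaifman A) k)}

namespace ForestCover

variable {V : Type} {adj : V → V → Prop} {k : ℕ}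

/-- The rank of a vertex: the size of its chain of predecessors. -/
noncomputable def rank (F : ForestCover V adj k) (a : V) : ℕ := {b | F.le b a}.ncard

lemma rank_pos (F : ForestCover V adj k) (a : V) : 0 < F.rank a :=
  (Set.ncard_pos (F.pred_finite a)).mpr ⟨a, F.le_refl a⟩

lemma rank_mono (F : ForestCover V adj k) {a b : V} (h : F.le b a) : F.rank b ≤ F.rank a :=
  Set.ncard_le_ncard (fun c hc => F.le_trans c b a hc h) (F.pred_finite a)

lemma rank_lt (F : ForestCover V adj k) {a b : V} (h : F.le b a) (hne : b ≠ a) :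
    F.rank b < F.rank a := by
  refine Set.ncard_lt_ncard ⟨fun c hc => F.le_trans c b a hc h, fun hsub => ?_⟩
    (F.pred_finite a)
  exact hne (F.le_antisymm b a h (hsub (F.le_refl a)))

lemma rank_injOn (F : ForestCover V adj k) {a b c : V} (hb : F.le b a) (hc : F.le c a)
    (h : F.rank b = F.rank c) : b = c := by
  by_contra hne
  rcases F.pred_chain a b c hb hc with h' | h'
  · exact absurd h (Nat.ne_of_lt (F.rank_lt h' hne))
  · exact absurd h.symm (Nat.ne_of_lt (F.rank_lt h' (Ne.symm hne)))

lemma exists_rank (F : ForestCover V adj k) {a : V} {m : ℕ} (h0 : 0 < m) (hm : m ≤ F.rank a) :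
    ∃ b, F.le b a ∧ F.rank b = m := by
  have hinj : Set.InjOn F.rank {b | F.le b a} := fun b hb c hc h => F.rank_injOn hb hc h
  have himg : F.rank '' {b | F.le b a} = Set.Icc 1 (F.rank a) := by
    apply Set.eq_of_subset_of_ncard_le
    · rintro x ⟨b, hb, rfl⟩
      exact ⟨F.rank_pos b, F.rank_mono hb⟩
    · rw [Set.ncard_image_of_injOn hinj, ← Finset.coe_Icc, Set.ncard_coe_finset,
        Nat.card_Icc]
      simp [rank]
    · exact Set.finite_Icc _ _
  have hmem : m ∈ Set.Icc 1 (F.rank a) := ⟨h0, hm⟩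
  rw [← himg] at hmem
  obtain ⟨b, hb, hb'⟩ := hmem
  exact ⟨b, hb, hb'⟩

/-- Pick the unique predecessor of `a` of rank `m`. -/
noncomputable def pick (F : ForestCover V adj k) (a : V) (m : ℕ) : V :=
  open Classical in
  if h : ∃ b, F.le b a ∧ F.rank b = m then h.choose else a

lemma pick_spec (F : ForestCover V adj k) {a : V} {m : ℕ} (h0 : 0 < m) (hm : m ≤ F.rank a) :
    F.le (F.pick a m) a ∧ F.rank (F.pick a m) = m := by
  classical
  have h := F.exists_rank h0 hm
  rw [pick]
  rw [dif_pos h]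
  exact h.choose_spec

/-- The chain of predecessors of `a`, listed in increasing order. -/
noncomputable def chainList (F : ForestCover V adj k) (a : V) : List V :=
  (List.range (F.rank a)).map fun i => F.pick a (i + 1)

lemma length_chainList (F : ForestCover V adj k) (a : V) :
    (F.chainList a).length = F.rank a := by simp [chainList]

lemma getElem_chainList (F : ForestCover V adj k) (a : V) {i : ℕ}
    (h : i < (F.chainList a).length) : (F.chainList a)[i] = F.pick a (i + 1) := by
  simp [chainList]

lemma chainList_take (F : ForestCover V adj k) {a b : V} (h : F.le b a) :
    F.chainList b = (F.chainList a).take (F.rank b) := by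
  have hm := F.rank_mono h
  apply List.ext_getElem
  · simp [length_chainList]; omega
  · intro n h1 h2
    rw [List.getElem_take, F.getElem_chainList, F.getElem_chainList]
    have hn : n < F.rank b := by simpa [length_chainList] using h1
    have s1 := F.pick_spec (a := b) (m := n + 1) (by omega) hn
    have s2 := F.pick_spec (a := a) (m := n + 1) (by omega) (Nat.le_trans hn hm)
    exact F.rank_injOn (F.le_trans _ _ _ s1.1 h) s2.1 (s1.2.trans s2.2.symm)

/-- The chain of predecessors as a nonempty sequence of length at most `k`. -/
noncomputable def chainSeq (F : ForestCover V adj k) (a : V) : NESeq V k :=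
  ⟨F.chainList a, by
    constructor
    · apply List.ne_nil_of_length_pos
      rw [F.length_chainList]; exact F.rank_pos a
    · rw [F.length_chainList]; exact F.height a⟩

lemma lastOf_chainSeq (F : ForestCover V adj k) (a : V) : lastOf (F.chainSeq a) = a := by
  have hne : F.chainList a ≠ [] := (F.chainSeq a).2.1
  show (F.chainList a).getLast hne = a
  rw [List.getLast_eq_getElem, F.getElem_chainList]
  have hr := F.rank_pos a
  have hl : (F.chainList a).length - 1 + 1 = F.rank a := by rw [F.length_chainList]; omega
  rw [hl]
  have s := F.pick_spec (a := a) hr le_rfl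
  exact F.rank_injOn s.1 (F.le_refl a) s.2

end ForestCover

lemma isEFCoalg_chainSeq {σ : Signature} {A : Struct σ} {k : ℕ}
    (F : ForestCover A.carrier (gaifman A) k) : IsEFCoalg k A F.chainSeq := by
  refine ⟨?_, F.lastOf_chainSeq, ?_⟩
  · intro r x hx
    constructor
    · intro i j
      by_cases hij : x i = x j
      · left
        show (F.chainSeq (x i)).1 <+: (F.chainSeq (x j)).1
        rw [hij]
      · have hadj : gaifman A (x i) (x j) :=
          ⟨hij, r, x, i, j, hx, rfl, rfl, fun h => hij (by rw [h])⟩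
        rcases F.cover _ _ hadj with h | h
        · left
          show F.chainList (x i) <+: F.chainList (x j)
          rw [F.chainList_take h]; exact List.take_prefix _ _
        · right
          show F.chainList (x j) <+: F.chainList (x i)
          rw [F.chainList_take h]; exact List.take_prefix _ _
    · have he : (fun i => lastOf (F.chainSeq (x i))) = x :=
        funext fun i => F.lastOf_chainSeq (x i)
      show A.rel r fun i => lastOf (F.chainSeq (x i))
      rw [he]; exact hx
  · intro a i h
    have hi : i < F.rank a := by
      simpa [ForestCover.chainSeq, F.length_chainList] using h
    have s := F.pick_spec (a := a) (m := i + 1) (by omega) hi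
    show F.chainList ((F.chainList a).get ⟨i, h⟩) = (F.chainList a).take (i + 1)
    rw [List.get_eq_getElem, F.getElem_chainList, F.chainList_take s.1, s.2]

noncomputable def forestOfCoalg {σ : Signature} {A : Struct σ} {k : ℕ} [Fintype A.carrier]
    (α : A.carrier → NESeq A.carrier k) (hα : IsEFCoalg k A α) :
    ForestCover A.carrier (gaifman A) k where
  le a b := (α a).1 <+: (α b).1
  le_refl a := List.prefix_refl _
  le_antisymm a b h1 h2 := by
    have he : (α a).1 = (α b).1 :=
      h1.eq_of_length (Nat.le_antisymm h1.length_le h2.length_le)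
    have hs : α a = α b := Subtype.ext he
    rw [← hα.2.1 a, ← hα.2.1 b, hs]
  le_trans a b c h1 h2 := h1.trans h2
  pred_chain a b c hb hc := List.prefix_or_prefix_of_prefix hb hc
  pred_finite a := Set.toFinite _
  height a := by
    show {b | (α b).1 <+: (α a).1}.ncard ≤ k
    have hmaps : ∀ b ∈ {b | (α b).1 <+: (α a).1},
        (fun b => (α b).1.length) b ∈ Set.Icc 1 k :=
      fun b _hb => ⟨List.length_pos_iff.mpr (α b).2.1, (α b).2.2⟩
    have hinj : Set.InjOn (fun b => (α b).1.length) {b | (α b).1 <+: (α a).1} := by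
      intro b hb c hc hlen
      have hb' : (α b).1 <+: (α a).1 := hb
      have hc' : (α c).1 <+: (α a).1 := hc
      have hp : (α b).1 <+: (α c).1 :=
        List.prefix_of_prefix_length_le hb' hc' (le_of_eq hlen)
      have he : (α b).1 = (α c).1 := hp.eq_of_length hlen
      have hs : α b = α c := Subtype.ext he
      rw [← hα.2.1 b, ← hα.2.1 c, hs]
    have hle := Set.ncard_le_ncard_of_injOn (fun b => (α b).1.length) hmaps hinj
      (Set.finite_Icc 1 k)
    refine le_trans hle ?_
    rw [← Finset.coe_Icc, Set.ncard_coe_finset, Nat.card_Icc]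
    omega
  cover a b hadj := by
    obtain ⟨_hne, r, x, i, j, hr, hxi, hxj, _hij⟩ := hadj
    have hc := (hα.1 r x hr).1 i j
    show (α a).1 <+: (α b).1 ∨ (α b).1 <+: (α a).1
    simpa only [hxi, hxj] using hc

/-- For every finite (nonempty) structure `A`, the tree-depth of `A`
equals the least `k > 0` such that an `E_k`-coalgebra exists on `A`. -/
theorem treeDepth_eq_coalgebraNumber
    (σ : Signature) (A : Struct σ) [Fintype A.carrier] [Nonempty A.carrier] :
    treeDepth A = sInf {k | 0 < k ∧ ∃ α : A.carrier → NESeq A.carrier k, IsEFCoalg k A α} := by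
  unfold treeDepth
  congr 1
  ext k
  simp only [Set.mem_setOf_eq]
  constructor
  · rintro ⟨F⟩
    have hk : 0 < k :=
      lt_of_lt_of_le (F.rank_pos (Classical.arbitrary A.carrier)) (F.height _)
    exact ⟨hk, F.chainSeq, isEFCoalg_chainSeq F⟩
  · rintro ⟨_hk, α, hα⟩
    exact ⟨forestOfCoalg α hα⟩
end

section
/- For every finite σ-structure A, the tree-width of A equals κ^P(A) − 1, where κ^P(A) is the least k such that there exists a P_k-coalgebra on A, P_k being the k-pebbling comonad. -/
/-- The universe of the pebbling comonad: finite nonempty sequences of moves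
`(pebble index, element)`. -/
def Peb (A : Type) (k : ℕ) : Type := { l : List (Fin k × A) // l ≠ [] }

/-- Last element of a pebbling play. -/
def lastP {A : Type} {k : ℕ} (s : Peb A k) : Fin k × A := s.1.getLast s.2

/-- The pebbling compatibility condition on a pair of plays: they are
prefix-comparable, and the pebble index of the last move of the shorter one does not
reappear in the suffix extending it to the longer one. -/
def pebCond {A : Type} {k : ℕ} (s t : List (Fin k × A)) : Prop :=
  (s <+: t ∧ ∀ m ∈ t.drop s.length, s.getLast?.map Prod.fst ≠ some m.1) ∨
  (t <+: s ∧ ∀ m ∈ s.drop t.length, t.getLast?.map Prod.fst ≠ some m.1)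

/-- The pebbling comonad on structures: `P_k A` has universe the finite nonempty
sequences over `{1,…,k} × A`; a relation holds of a tuple of plays iff they are
pairwise prefix-comparable satisfying the pebbling condition, and the relation holds in
`A` of their last elements. -/
def PebStruct {σ : Signature} (k : ℕ) (A : Struct σ) : Struct σ where
  carrier := Peb A.carrier k
  rel r x := (∀ i j, pebCond (x i).1 (x j).1) ∧ A.rel r (fun i => (lastP (x i)).2)

/-- Co-Kleisli coextension for the pebbling comonad. -/
def coextP {A B : Type} {k : ℕ} (f : Peb A k → B) (s : Peb A k) : Peb B k :=
  ⟨(List.finRange s.1.length).map fun i =>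
      ((s.1.get i).1, f ⟨s.1.take (i.1 + 1), by
        have := i.2
        apply List.ne_nil_of_length_pos
        simp only [List.length_take]
        omega⟩), by
    apply List.ne_nil_of_length_pos
    have := s.2
    simp only [List.length_map, List.length_finRange]
    exact List.length_pos_iff.mpr this⟩

/-- `α : A → P_k A` is a coalgebra for the pebbling comonad. -/
def IsPebCoalg {σ : Signature} (k : ℕ) (A : Struct σ) (α : A.carrier → Peb A.carrier k) : Prop :=
  IsHom A (PebStruct k A) α ∧
  (∀ a, (lastP (α a)).2 = a) ∧
  (∀ (a : A.carrier) (i : ℕ) (h : i < (α a).1.length),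
      (α ((α a).1.get ⟨i, h⟩).2).1 = (α a).1.take (i + 1))

/-- A `k`-pebble forest cover of a graph `(V, adj)`: a forest cover together with a
pebbling function `p : V → {1,…,k}` such that if `v ⌢ v'` with `v ≤ v'` then
`p v ≠ p w` for all `w` with `v < w ≤ v'`. -/
structure PebbleForestCover (V : Type) (adj : V → V → Prop) (k : ℕ) where
  le : V → V → Prop
  le_refl : ∀ a, le a a
  le_antisymm : ∀ a b, le a b → le b a → a = b
  le_trans : ∀ a b c, le a b → le b c → le a c
  pred_chain : ∀ a b c, le b a → le c a → le b c ∨ le c b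
  pred_finite : ∀ a, {b | le b a}.Finite
  cover : ∀ a b, adj a b → le a b ∨ le b a
  p : V → Fin k
  pebble : ∀ v v' w, adj v v' → le v v' → le v w → v ≠ w → le w v' → p v ≠ p w

/-- A tree decomposition of width ≤ w of a graph `(V, adj)`: a tree `(T, ≤)` with a
labelling `λ : T → P(V)` such that every vertex occurs in some label, every edge is
contained in some label, the set of nodes containing a given vertex is path-closed, and
every label has at most `w + 1` elements. -/
structure TreeDecomp (V : Type) (adj : V → V → Prop) (w : ℕ) where
  T : Type
  le : T → T → Prop
  le_refl : ∀ a, le a a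
  le_antisymm : ∀ a b, le a b → le b a → a = b
  le_trans : ∀ a b c, le a b → le b c → le a c
  pred_chain : ∀ a b c, le b a → le c a → le b c ∨ le c b
  pred_finite : ∀ a, {b | le b a}.Finite
  root : T
  root_le : ∀ x, le root x
  label : T → Set V
  td1 : ∀ v, ∃ x, v ∈ label x
  td2 : ∀ v v', adj v v' → ∃ x, v ∈ label x ∧ v' ∈ label x
  td3 : ∀ (v : V) (x y z : T), v ∈ label x → v ∈ label y →
      (le z x ∨ le z y) → (∀ u, le u x → le u y → le u z) → v ∈ label z
  label_finite : ∀ x, (label x).Finite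
  width : ∀ x, (label x).ncard ≤ w + 1

/-- The tree-width of a structure: the minimum width of a tree decomposition of its
Gaifman graph. -/
noncomputable def treeWidth {σ : Signature} (A : Struct σ) : ℕ :=
  sInf {w | Nonempty (TreeDecomp A.carrier (gaifman A) w)}

/-- The pebbling coalgebra number of a structure: the least `k` such that a
`P_k`-coalgebra exists on `A`. -/
noncomputable def pebCoalgNumber {σ : Signature} (A : Struct σ) : ℕ :=
  sInf {k | ∃ α : A.carrier → Peb A.carrier k, IsPebCoalg k A α}

section Helpers

variable {β : Type*}

lemma getLast_congr {l₁ l₂ : List β} (h₁ : l₁ ≠ []) (h₂ : l₂ ≠ []) (h : l₁ = l₂) :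
    l₁.getLast h₁ = l₂.getLast h₂ := by subst h; rfl

lemma prefix_antisymm {l₁ l₂ : List β} (h₁ : l₁ <+: l₂) (h₂ : l₂ <+: l₁) : l₁ = l₂ :=
  h₁.sublist.eq_of_length_le h₂.length_le

lemma exists_max_of_list (le : β → β → Prop)
    (htrans : ∀ a b c, le a b → le b c → le a c)
    (hrefl : ∀ a, le a a) :
    ∀ (l : List β), l ≠ [] → (∀ a ∈ l, ∀ b ∈ l, le a b ∨ le b a) →
      ∃ z ∈ l, ∀ u ∈ l, le u z := by
  intro l
  induction l with
  | nil => simp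
  | cons a t ih =>
    intro _ hc
    rcases eq_or_ne t [] with rfl | ht
    · exact ⟨a, by simp, by simpa using hrefl a⟩
    · obtain ⟨z, hz, hmax⟩ := ih ht (fun x hx y hy => hc x (by simp [hx]) y (by simp [hy]))
      rcases hc a (by simp) z (by simp [hz]) with h | h
      · refine ⟨z, by simp [hz], ?_⟩
        intro u hu
        rcases List.mem_cons.1 hu with rfl | hu
        · exact h
        · exact hmax u hu
      · refine ⟨a, by simp, ?_⟩
        intro u hu
        rcases List.mem_cons.1 hu with rfl | hu
        · exact hrefl _
        · exact htrans u z _ (hmax u hu) h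

lemma exists_max_of_finite (le : β → β → Prop)
    (htrans : ∀ a b c, le a b → le b c → le a c)
    (hrefl : ∀ a, le a a) {S : Set β} (hfin : S.Finite) (hne : S.Nonempty)
    (hc : ∀ a ∈ S, ∀ b ∈ S, le a b ∨ le b a) :
    ∃ z ∈ S, ∀ u ∈ S, le u z := by
  obtain ⟨x, hx⟩ := hne
  have hmem : ∀ y, y ∈ hfin.toFinset.toList ↔ y ∈ S := by
    intro y; rw [Finset.mem_toList, Set.Finite.mem_toFinset]
  obtain ⟨z, hz, hmax⟩ := exists_max_of_list le htrans hrefl hfin.toFinset.toList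
    (by intro h0; have := (hmem x).2 hx; rw [h0] at this; simp at this)
    (fun a ha b hb => hc a ((hmem a).1 ha) b ((hmem b).1 hb))
  exact ⟨z, (hmem z).1 hz, fun u hu => hmax u ((hmem u).2 hu)⟩

lemma exists_min_of_finite (le : β → β → Prop)
    (htrans : ∀ a b c, le a b → le b c → le a c)
    (hrefl : ∀ a, le a a) {S : Set β} (hfin : S.Finite) (hne : S.Nonempty)
    (hc : ∀ a ∈ S, ∀ b ∈ S, le a b ∨ le b a) :
    ∃ z ∈ S, ∀ u ∈ S, le z u := by
  obtain ⟨z, hz, h⟩ := exists_max_of_finite (fun a b => le b a)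
    (fun a b c h1 h2 => htrans c b a h2 h1) hrefl hfin hne
    (fun a ha b hb => (hc a ha b hb).symm)
  exact ⟨z, hz, h⟩

end Helpers

section CoalgToDecomp

variable {σ : Signature}

theorem coalg_to_decomp (A : Struct σ) [Fintype A.carrier] [Nonempty A.carrier]
    (k : ℕ) (α : A.carrier → Peb A.carrier k) (h : IsPebCoalg k A α) :
    Nonempty (TreeDecomp A.carrier (gaifman A) (k - 1)) := by
  classical
  obtain ⟨hhom, hcounit, _⟩ := h
  have hk : 1 ≤ k := by
    obtain ⟨a⟩ := ‹Nonempty A.carrier›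
    have := (lastP (α a)).1.isLt
    omega
  let sle : A.carrier → A.carrier → Prop := fun a b => (α a).1 <+: (α b).1
  have hinj : ∀ a b, (α a).1 = (α b).1 → a = b := by
    intro a b hab
    rw [← hcounit a, ← hcounit b]
    unfold lastP
    rw [getLast_congr (α a).2 (α b).2 hab]
  have santi : ∀ a b, sle a b → sle b a → a = b := fun a b h1 h2 =>
    hinj a b (prefix_antisymm h1 h2)
  let pa : A.carrier → Fin k := fun a => (lastP (α a)).1
  let lab : Option A.carrier → Set A.carrier := fun x =>
    match x with
    | none => ∅
    | some b => {a | sle a b ∧ ∀ w, sle a w → a ≠ w → sle w b → pa a ≠ pa w}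
  let ole : Option A.carrier → Option A.carrier → Prop := fun x y =>
    match x, y with
    | none, _ => True
    | some _, none => False
    | some a, some b => sle a b
  have live_self : ∀ b, b ∈ lab (some b) := by
    intro b
    exact ⟨List.prefix_refl _, fun w h1 h2 h3 => absurd (santi b w h1 h3) h2⟩
  have key : ∀ a b, sle a b →
      (∀ m ∈ (α b).1.drop (α a).1.length, (α a).1.getLast?.map Prod.fst ≠ some m.1) →
      a ∈ lab (some b) := by
    intro a b hab fresh
    refine ⟨hab, fun w h1 h2 h3 => ?_⟩
    have hlt : (α a).1.length < (α w).1.length := by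
      rcases lt_or_eq_of_le h1.length_le with h | h
      · exact h
      · exact absurd (hinj a w (h1.sublist.eq_of_length_le h.ge)) h2
    have hlw : (α w).1.length ≤ (α b).1.length := h3.length_le
    have hw0 : 0 < (α w).1.length := List.length_pos_iff.2 (α w).2
    have hmem : lastP (α w) ∈ (α b).1.drop (α a).1.length := by
      have hgl : lastP (α w) = (α b).1[(α w).1.length - 1]'(by omega) := by
        unfold lastP
        rw [List.getLast_eq_getElem]
        exact h3.getElem _
      have h2' : (α b).1[(α w).1.length - 1]'(by omega) =
          ((α b).1.drop (α a).1.length)[(α w).1.length - 1 - (α a).1.length]'(by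
            simp only [List.length_drop]; omega) := by
        rw [List.getElem_drop]
        congr 1
        omega
      rw [hgl, h2']
      exact List.getElem_mem _
    have hne' := fresh _ hmem
    rw [List.getLast?_eq_getLast (α a).2] at hne'
    simp only [Option.map_some] at hne'
    intro hpaeq
    exact hne' (congrArg some hpaeq)
  refine ⟨{
    T := Option A.carrier
    le := ole
    le_refl := by
      rintro (_ | a)
      · exact trivial
      · exact List.prefix_refl _
    le_antisymm := by
      rintro (_ | a) (_ | b) h1 h2
      · rfl
      · exact h2.elim
      · exact h1.elim
      · exact congrArg some (santi a b h1 h2)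
    le_trans := by
      rintro (_ | a) (_ | b) (_ | c) h1 h2
      · exact trivial
      · exact trivial
      · exact trivial
      · exact trivial
      · exact h1.elim
      · exact h1.elim
      · exact h2.elim
      · exact List.IsPrefix.trans h1 h2
    pred_chain := by
      rintro (_ | a) (_ | b) (_ | c) h1 h2
      · exact Or.inl trivial
      · exact Or.inl trivial
      · exact h1.elim
      · exact h1.elim
      · exact Or.inl trivial
      · exact Or.inl trivial
      · exact Or.inr trivial
      · exact List.prefix_or_prefix_of_prefix h1 h2
    pred_finite := fun a => Set.toFinite _
    root := none
    root_le := by rintro (_ | a) <;> exact trivial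
    label := lab
    td1 := fun v => ⟨some v, live_self v⟩
    td2 := by
      intro v v' hadj
      obtain ⟨hne, r, x, i, j, hrel, hxi, hxj, hij⟩ := hadj
      have hpc := (hhom r x hrel).1 i j
      change pebCond (α (x i)).1 (α (x j)).1 at hpc
      rw [hxi, hxj] at hpc
      rcases hpc with ⟨hp, hf⟩ | ⟨hp, hf⟩
      · exact ⟨some v', key v v' hp hf, live_self v'⟩
      · exact ⟨some v, live_self v, key v' v hp hf⟩
    td3 := by
      rintro v (_ | b) (_ | b') (_ | c) hx hy hz hmeet
      · exact hx.elim
      · exact hx.elim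
      · exact hx.elim
      · exact hx.elim
      · exact hy.elim
      · exact hy.elim
      · exact (hmeet (some v) hx.1 hy.1).elim
      · obtain ⟨hvb, hlive⟩ := hx
        obtain ⟨hvb', hlive'⟩ := hy
        have hvc : sle v c := hmeet (some v) hvb hvb'
        refine ⟨hvc, fun w h1 h2 h3 => ?_⟩
        rcases hz with hcb | hcb'
        · exact hlive w h1 h2 (h3.trans hcb)
        · exact hlive' w h1 h2 (h3.trans hcb')
    label_finite := fun x => Set.toFinite _
    width := by
      rintro (_ | b)
      · rw [show lab none = ∅ from rfl, Set.ncard_empty]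
        exact Nat.zero_le _
      · have hinjOn : Set.InjOn pa (lab (some b)) := by
          intro a1 h1 a2 h2 heq
          by_contra hne12
          rcases List.prefix_or_prefix_of_prefix h1.1 h2.1 with hp | hp
          · exact h1.2 a2 hp hne12 h2.1 heq
          · exact h2.2 a1 hp (Ne.symm hne12) h1.1 heq.symm
        have hcard := Set.ncard_le_ncard_of_injOn pa (fun a _ => Set.mem_univ (pa a))
          hinjOn (Set.finite_univ)
        rw [Set.ncard_univ, Nat.card_eq_fintype_card, Fintype.card_fin] at hcard
        omega
  }⟩

end CoalgToDecomp
section MoreHelpers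

variable {β γ : Type*}

lemma getLast_map' (f : β → γ) {l : List β} (h : l ≠ []) (h' : l.map f ≠ []) :
    (l.map f).getLast h' = f (l.getLast h) := by
  rw [List.getLast_eq_getElem, List.getLast_eq_getElem, List.getElem_map]
  congr 1
  simp

lemma getLast_of_maximal (f : β → ℕ) :
    ∀ {l : List β}, l.Pairwise (fun a b => f a < f b) → ∀ {v}, v ∈ l →
      (∀ x ∈ l, f x ≤ f v) → ∀ (h0 : l ≠ []), l.getLast h0 = v := by
  intro l
  induction l with
  | nil => intro _ v hv; simp at hv
  | cons a t ih =>
    intro hp v hv hmax h0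
    rcases eq_or_ne t [] with rfl | ht
    · simp at hv
      simp [hv]
    · rw [List.getLast_cons ht]
      rcases List.mem_cons.1 hv with rfl | hv'
      · exfalso
        obtain ⟨y, hy⟩ := List.exists_mem_of_ne_nil t ht
        have h1 := (List.pairwise_cons.1 hp).1 y hy
        have h2 := hmax y (by simp [hy])
        omega
      · exact ih (List.pairwise_cons.1 hp).2 hv' (fun x hx => hmax x (by simp [hx])) ht

lemma filter_prefix_of_downclosed (q : β → Bool) :
    ∀ {l : List β}, l.Pairwise (fun a b => q b = true → q a = true) →
      l.filter q <+: l := by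
  intro l
  induction l with
  | nil => simp
  | cons a t ih =>
    intro hp
    by_cases ha : q a = true
    · rw [List.filter_cons_of_pos ha]
      exact List.cons_prefix_cons.2 ⟨rfl, ih (List.pairwise_cons.1 hp).2⟩
    · rw [List.filter_cons_of_neg (by simp [ha])]
      have : t.filter q = [] := by
        apply List.filter_eq_nil_iff.2
        intro x hx
        intro hqx
        exact ha ((List.pairwise_cons.1 hp).1 x hx hqx)
      rw [this]
      exact List.nil_prefix

end MoreHelpers

section DecompToCoalg

variable {σ : Signature}

theorem decomp_to_coalg (A : Struct σ) [Fintype A.carrier] (w : ℕ)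
    (D : TreeDecomp A.carrier (gaifman A) w) :
    ∃ α : A.carrier → Peb A.carrier (w + 1), IsPebCoalg (w + 1) A α := by
  classical
  -- meets in the tree
  have meet : ∀ x y : D.T, ∃ z, D.le z x ∧ D.le z y ∧ ∀ u, D.le u x → D.le u y → D.le u z := by
    intro x y
    have hfin : {u | D.le u x ∧ D.le u y}.Finite :=
      (D.pred_finite x).subset (fun u hu => hu.1)
    obtain ⟨z, hz, hmax⟩ := exists_max_of_finite D.le D.le_trans D.le_refl hfin
      ⟨D.root, D.root_le x, D.root_le y⟩
      (fun a ha b hb => D.pred_chain x a b ha.1 hb.1)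
    exact ⟨z, hz.1, hz.2, fun u h1 h2 => hmax u ⟨h1, h2⟩⟩
  -- minimal node containing a vertex
  have hmex : ∀ v, ∃ t, v ∈ D.label t ∧ ∀ y, v ∈ D.label y → D.le t y := by
    intro v
    obtain ⟨x, hx⟩ := D.td1 v
    have hfin : {z | D.le z x ∧ v ∈ D.label z}.Finite :=
      (D.pred_finite x).subset (fun u hu => hu.1)
    obtain ⟨t, ht, hmin⟩ := exists_min_of_finite D.le D.le_trans D.le_refl hfin
      ⟨x, D.le_refl x, hx⟩
      (fun a ha b hb => D.pred_chain x a b ha.1 hb.1)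
    refine ⟨t, ht.2, fun y hy => ?_⟩
    obtain ⟨z, hzx, hzy, hmeet⟩ := meet x y
    have hvz : v ∈ D.label z := D.td3 v x y z hx hy (Or.inl hzx) hmeet
    exact D.le_trans t z y (hmin z ⟨hzx, hvz⟩) hzy
  choose m hm1 hm2 using hmex
  set N := Fintype.card A.carrier with hN
  let ι : A.carrier → ℕ := fun v => ((Fintype.equivFin A.carrier) v : ℕ)
  have hιinj : ∀ a b, ι a = ι b → a = b := fun a b hab =>
    (Fintype.equivFin A.carrier).injective (Fin.val_injective hab)
  have hιlt : ∀ v, ι v < N := fun v => ((Fintype.equivFin A.carrier) v).isLt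
  -- the forest order
  let lt' : A.carrier → A.carrier → Prop := fun a b =>
    (D.le (m a) (m b) ∧ m a ≠ m b) ∨ (m a = m b ∧ ι a < ι b)
  let le' : A.carrier → A.carrier → Prop := fun a b => lt' a b ∨ a = b
  have hml : ∀ a b, lt' a b → D.le (m a) (m b) := by
    intro a b h
    rcases h with h | h
    · exact h.1
    · rw [h.1]; exact D.le_refl _
  have hml' : ∀ a b, le' a b → D.le (m a) (m b) := by
    intro a b h
    rcases h with h | rfl
    · exact hml a b h
    · exact D.le_refl _
  have lt'_irrefl : ∀ a, ¬ lt' a a := by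
    intro a h
    rcases h with h | h
    · exact h.2 rfl
    · omega
  have lt'_trans : ∀ a b c, lt' a b → lt' b c → lt' a c := by
    intro a b c h1 h2
    rcases h1 with ⟨h1, hne1⟩ | ⟨he1, hι1⟩ <;> rcases h2 with ⟨h2, hne2⟩ | ⟨he2, hι2⟩
    · refine Or.inl ⟨D.le_trans _ _ _ h1 h2, fun he => ?_⟩
      rw [← he] at h2
      exact hne1 (D.le_antisymm _ _ h1 h2)
    · exact Or.inl ⟨he2 ▸ h1, he2 ▸ hne1⟩
    · exact Or.inl ⟨he1 ▸ h2, fun he => hne2 (he1 ▸ he)⟩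
    · exact Or.inr ⟨he1.trans he2, lt_trans hι1 hι2⟩
  have le'_refl : ∀ a, le' a a := fun a => Or.inr rfl
  have le'_trans : ∀ a b c, le' a b → le' b c → le' a c := by
    intro a b c h1 h2
    rcases h1 with h1 | rfl
    · rcases h2 with h2 | rfl
      · exact Or.inl (lt'_trans _ _ _ h1 h2)
      · exact Or.inl h1
    · exact h2
  have le'_antisymm : ∀ a b, le' a b → le' b a → a = b := by
    intro a b h1 h2
    rcases h1 with h1 | rfl
    · rcases h2 with h2 | rfl
      · exact absurd (lt'_trans _ _ _ h1 h2) (lt'_irrefl a)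
      · rfl
    · rfl
  have lt'_of_le' : ∀ a b, le' a b → a ≠ b → lt' a b := by
    intro a b h hne
    rcases h with h | rfl
    · exact h
    · exact absurd rfl hne
  -- comparability
  have comp_of_m : ∀ a b, (D.le (m a) (m b) ∨ D.le (m b) (m a)) → le' a b ∨ le' b a := by
    intro a b hcomp
    rcases eq_or_ne a b with rfl | hne
    · exact Or.inl (le'_refl a)
    rcases eq_or_ne (m a) (m b) with he | hme
    · rcases Nat.lt_trichotomy (ι a) (ι b) with h | h | h
      · exact Or.inl (Or.inl (Or.inr ⟨he, h⟩))
      · exact absurd (hιinj a b h) hne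
      · exact Or.inr (Or.inl (Or.inr ⟨he.symm, h⟩))
    · rcases hcomp with h | h
      · exact Or.inl (Or.inl (Or.inl ⟨h, hme⟩))
      · exact Or.inr (Or.inl (Or.inl ⟨h, hme.symm⟩))
  have comp' : ∀ a b c, le' a c → le' b c → le' a b ∨ le' b a := by
    intro a b c h1 h2
    exact comp_of_m a b (D.pred_chain (m c) (m a) (m b) (hml' _ _ h1) (hml' _ _ h2))
  -- the measure
  let μ : A.carrier → ℕ := fun v => {s | D.le s (m v)}.ncard * (N + 1) + ι v
  have hμlt : ∀ a b, lt' a b → μ a < μ b := by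
    intro a b h
    rcases h with ⟨hle, hne⟩ | ⟨he, hι⟩
    · have hss : {s | D.le s (m a)} ⊂ {s | D.le s (m b)} := by
        constructor
        · intro s hs
          exact D.le_trans _ _ _ hs hle
        · intro hsub
          have : D.le (m b) (m a) := hsub (D.le_refl (m b))
          exact hne (D.le_antisymm _ _ hle this)
      have hlt := Set.ncard_lt_ncard hss (D.pred_finite (m b))
      have h1 := hιlt a
      have h2 := hιlt b
      calc {s | D.le s (m a)}.ncard * (N + 1) + ι a
          < {s | D.le s (m a)}.ncard * (N + 1) + (N + 1) := by omega
        _ = ({s | D.le s (m a)}.ncard + 1) * (N + 1) := by ring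
        _ ≤ {s | D.le s (m b)}.ncard * (N + 1) := Nat.mul_le_mul_right _ (by omega)
        _ ≤ {s | D.le s (m b)}.ncard * (N + 1) + ι b := Nat.le_add_right _ _
    · have : {s | D.le s (m a)} = {s | D.le s (m b)} := by rw [he]
      rw [show μ a = {s | D.le s (m a)}.ncard * (N+1) + ι a from rfl,
        show μ b = {s | D.le s (m b)}.ncard * (N+1) + ι b from rfl, this]
      omega
  have hμle : ∀ a b, le' a b → μ a ≤ μ b := by
    intro a b h
    rcases h with h | rfl
    · exact le_of_lt (hμlt a b h)
    · exact le_refl _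
  have hμinj : ∀ a b, μ a = μ b → a = b := by
    intro a b h
    have h1 := hιlt a
    have h2 := hιlt b
    have emod : ∀ v, μ v % (N + 1) = ι v := by
      intro v
      show ({s | D.le s (m v)}.ncard * (N + 1) + ι v) % (N + 1) = ι v
      rw [Nat.mul_comm, Nat.mul_add_mod, Nat.mod_eq_of_lt (by have := hιlt v; omega)]
    have : ι a = ι b := by
      rw [← emod a, ← emod b, h]
    exact hιinj a b this
  -- pebble function, by well-founded recursion along μ
  have havoid : ∀ (s : Finset (Fin (w + 1))), s.card ≤ w → ∃ x : Fin (w + 1), x ∉ s := by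
    intro s hs
    by_contra hno
    push_neg at hno
    have hcard : (Finset.univ : Finset (Fin (w + 1))).card ≤ s.card :=
      Finset.card_le_card (fun x _ => hno x)
    rw [Finset.card_univ, Fintype.card_fin] at hcard
    omega
  let B : A.carrier → Finset A.carrier := fun v =>
    Finset.univ.filter (fun u => lt' u v ∧ u ∈ D.label (m v))
  have hBcard : ∀ v, (B v).card ≤ w := by
    intro v
    have hsub : B v ⊆ (D.label_finite (m v)).toFinset.erase v := by
      intro u hu
      obtain ⟨-, hlt, hlabel⟩ := Finset.mem_filter.1 hu
      refine Finset.mem_erase.2 ⟨fun he => lt'_irrefl v (he ▸ hlt), ?_⟩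
      exact (D.label_finite (m v)).mem_toFinset.2 hlabel
    have h1 := Finset.card_le_card hsub
    have h2 : ((D.label_finite (m v)).toFinset.erase v).card
        = (D.label_finite (m v)).toFinset.card - 1 :=
      Finset.card_erase_of_mem ((D.label_finite (m v)).mem_toFinset.2 (hm1 v))
    have h3 : (D.label_finite (m v)).toFinset.card = (D.label (m v)).ncard :=
      (Set.ncard_eq_toFinset_card _ (D.label_finite (m v))).symm
    have h4 := D.width (m v)
    omega
  let rlt : A.carrier → A.carrier → Prop := InvImage (· < ·) μ
  have wf : WellFounded rlt := InvImage.wf μ (Nat.lt_wfRel.wf)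
  let F : ∀ v, (∀ u, rlt u v → Fin (w + 1)) → Fin (w + 1) := fun v ih =>
    (havoid ((B v).attach.image
        (fun u => ih u.1 (hμlt _ _ (Finset.mem_filter.1 u.2).2.1)))
      (le_trans (le_trans (Finset.card_image_le) (le_of_eq Finset.card_attach))
        (hBcard v))).choose
  let p : A.carrier → Fin (w + 1) := wf.fix F
  have hpeq : ∀ v, p v = F v (fun u _ => p u) := fun v => wf.fix_eq F v
  have hpspec : ∀ v u, lt' u v → u ∈ D.label (m v) → p u ≠ p v := by
    intro v u hlt hlabel heq
    have hmem : p u ∈ (B v).attach.image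
        (fun u => (fun y (_ : rlt y v) => p y) u.1 (hμlt _ _ (Finset.mem_filter.1 u.2).2.1)) := by
      refine Finset.mem_image.2 ⟨⟨u, Finset.mem_filter.2 ⟨Finset.mem_univ u, hlt, hlabel⟩⟩,
        Finset.mem_attach _ _, rfl⟩
    have hnot := (havoid ((B v).attach.image
        (fun u => (fun y (_ : rlt y v) => p y) u.1 (hμlt _ _ (Finset.mem_filter.1 u.2).2.1)))
      (le_trans (le_trans (Finset.card_image_le) (le_of_eq Finset.card_attach))
        (hBcard v))).choose_spec
    rw [hpeq v] at heq
    rw [heq] at hmem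
    exact hnot hmem
  -- sorted enumeration of the carrier
  let rle : A.carrier → A.carrier → Prop := fun a b => μ a ≤ μ b
  haveI : IsTotal A.carrier rle := ⟨fun a b => le_total (μ a) (μ b)⟩
  haveI : IsTrans A.carrier rle := ⟨fun a b c h1 h2 => le_trans h1 h2⟩
  let L : List A.carrier := List.insertionSort rle (Finset.univ.toList)
  have hLperm : List.Perm L Finset.univ.toList := List.perm_insertionSort rle _
  have hLmem : ∀ v, v ∈ L := fun v => hLperm.mem_iff.2 (Finset.mem_toList.2 (Finset.mem_univ v))
  have hLnodup : L.Nodup := hLperm.nodup_iff.2 (Finset.nodup_toList _)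
  have hLsorted : L.Pairwise rle := List.pairwise_insertionSort rle _
  have hLpair : L.Pairwise (fun a b => μ a < μ b) :=
    (hLsorted.and hLnodup).imp
      (fun hab => lt_of_le_of_ne hab.1 (fun he => hab.2 (hμinj _ _ he)))
  -- the plays
  let W : A.carrier → List A.carrier := fun v => L.filter (fun u => decide (le' u v))
  have hWmem : ∀ x v, x ∈ W v ↔ le' x v := by
    intro x v
    show x ∈ L.filter (fun u => decide (le' u v)) ↔ le' x v
    rw [List.mem_filter]
    simp [hLmem x]
  have hWv : ∀ v, v ∈ W v := fun v => (hWmem v v).2 (le'_refl v)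
  have hWne : ∀ v, W v ≠ [] := by
    intro v h
    have := hWv v
    rw [h] at this
    simp at this
  have hWpair : ∀ v, (W v).Pairwise (fun a b => μ a < μ b) :=
    fun v => hLpair.sublist List.filter_sublist
  have hWnodup : ∀ v, (W v).Nodup := fun v => hLnodup.sublist List.filter_sublist
  have hWlast : ∀ v (h : W v ≠ []), (W v).getLast h = v := fun v h =>
    getLast_of_maximal μ (hWpair v) (hWv v) (fun x hx => hμle _ _ ((hWmem x v).1 hx)) h
  have hWprefix : ∀ u v, le' u v → W u <+: W v := by
    intro u v huv
    have hWu : W u = (W v).filter (fun x => decide (μ x ≤ μ u)) := by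
      show L.filter _ = (L.filter _).filter _
      rw [List.filter_filter]
      apply List.filter_congr
      intro x hx
      rw [← Bool.decide_and, decide_eq_decide]
      constructor
      · intro hxu
        exact ⟨hμle _ _ hxu, le'_trans _ _ _ hxu huv⟩
      · rintro ⟨hμxu, hxv⟩
        rcases comp' x u v hxv huv with h | h
        · exact h
        · have h1 : μ u ≤ μ x := hμle _ _ h
          have h2 : u = x := hμinj _ _ (le_antisymm h1 hμxu)
          rw [h2]
          exact le'_refl x
    rw [hWu]
    apply filter_prefix_of_downclosed
    exact (hWpair v).imp (fun hab hqb => by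
      simp only [decide_eq_true_eq] at *
      omega)
  let α : A.carrier → Peb A.carrier (w + 1) := fun v =>
    ⟨(W v).map (fun u => (p u, u)), by
      intro hnil
      exact hWne v (List.map_eq_nil_iff.1 hnil)⟩
  have hlastα : ∀ v, lastP (α v) = (p v, v) := by
    intro v
    show ((W v).map (fun u => (p u, u))).getLast _ = _
    rw [getLast_map' _ (hWne v) _, hWlast v (hWne v)]
  have hcounit : ∀ v, (lastP (α v)).2 = v := fun v => by rw [hlastα v]
  have hcomul : ∀ (v : A.carrier) (i : ℕ) (h : i < (α v).1.length),
      (α ((α v).1.get ⟨i, h⟩).2).1 = (α v).1.take (i + 1) := by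
    intro v i h
    have hWi : i < (W v).length := by
      have : (α v).1.length = (W v).length := by
        show ((W v).map _).length = _
        rw [List.length_map]
      omega
    have hget : ((α v).1.get ⟨i, h⟩).2 = (W v)[i]'hWi := by
      show (((W v).map (fun u => (p u, u))).get ⟨i, h⟩).2 = _
      rw [List.get_eq_getElem, List.getElem_map]
    set u := (W v)[i]'hWi with hu
    have humem : u ∈ W v := List.getElem_mem _
    have hule : le' u v := (hWmem u v).1 humem
    have hpre : W u <+: W v := hWprefix u v hule
    have hlen1 : (W u).length = i + 1 := by
      have h1 : 0 < (W u).length := List.length_pos_iff.2 (hWne u)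
      have h2 : (W u).length ≤ (W v).length := hpre.length_le
      have h3 : (W u).getLast (hWne u) = (W v)[(W u).length - 1]'(by omega) := by
        rw [List.getLast_eq_getElem]
        exact hpre.getElem _
      have h4 : (W v)[(W u).length - 1]'(by omega) = (W v)[i]'hWi := by
        rw [← h3, hWlast u (hWne u), hu]
      have h5 := ((hWnodup v).getElem_inj_iff).1 h4
      omega
    rw [hget]
    show (W u).map _ = ((W v).map _).take (i + 1)
    rw [← List.map_take]
    congr 1
    rw [← hlen1]
    exact List.prefix_iff_eq_take.1 hpre
  -- freshness of pebbles along adjacent pairs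
  have hfresh : ∀ u u', gaifman A u u' → lt' u u' →
      ∀ xx ∈ (W u').drop (W u).length, p u ≠ p xx := by
    intro u u' hadj hlt2 xx hx
    have hpre : W u <+: W u' := hWprefix u u' (Or.inl hlt2)
    have hxmem : xx ∈ W u' := List.mem_of_mem_drop hx
    have hxnotin : xx ∉ W u := by
      intro hin
      have hsplit := List.take_append_drop (W u).length (W u')
      have hnodup := hWnodup u'
      rw [← hsplit] at hnodup
      have hdisj := (List.nodup_append.1 hnodup).2.2
      have htake : W u = (W u').take (W u).length := List.prefix_iff_eq_take.1 hpre
      rw [htake] at hin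
      exact hdisj _ hin _ hx rfl
    have hxle : le' xx u' := (hWmem xx u').1 hxmem
    have hlt3 : lt' u xx := by
      rcases comp' u xx u' (Or.inl hlt2) hxle with h | h
      · apply lt'_of_le' u xx h
        rintro rfl
        exact hxnotin (hWv u)
      · exact absurd ((hWmem xx u).2 h) hxnotin
    obtain ⟨hne0, r0, x0, i0, j0, hrel0, hxi0, hxj0, hij0⟩ := hadj
    obtain ⟨t, hut, hu't⟩ := D.td2 u u' ⟨hne0, r0, x0, i0, j0, hrel0, hxi0, hxj0, hij0⟩
    have hmxle : D.le (m xx) t := D.le_trans _ _ _ (hml' xx u' hxle) (hm2 u' t hu't)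
    have hulab : u ∈ D.label (m xx) := by
      apply D.td3 u t (m u) (m xx) hut (hm1 u) (Or.inl hmxle)
      intro s hs1 hs2
      exact D.le_trans _ _ _ hs2 (hml u xx hlt3)
    exact hpspec xx u hlt3 hulab
  refine ⟨α, ?_, hcounit, hcomul⟩
  intro r x hrel
  refine ⟨?_, ?_⟩
  · intro i j
    change pebCond (α (x i)).1 (α (x j)).1
    rcases eq_or_ne (x i) (x j) with he | hne
    · rw [he]
      refine Or.inl ⟨List.prefix_refl _, ?_⟩
      intro mv hmv
      rw [show ((α (x j)).1.length) = (W (x j)).length from List.length_map _,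
        show (α (x j)).1 = (W (x j)).map (fun u => (p u, u)) from rfl,
        ← List.map_drop, List.drop_length] at hmv
      simp at hmv
    · have hadj : gaifman A (x i) (x j) :=
        ⟨hne, r, x, i, j, hrel, rfl, rfl, fun he' => hne (by rw [he'])⟩
      have hadj' : gaifman A (x j) (x i) :=
        ⟨hne.symm, r, x, j, i, hrel, rfl, rfl, fun he' => hne (by rw [he'])⟩
      obtain ⟨t, hit, hjt⟩ := D.td2 _ _ hadj
      have hcomp := comp_of_m (x i) (x j) (D.pred_chain t _ _ (hm2 _ t hit) (hm2 _ t hjt))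
      have main : ∀ a b, gaifman A a b → lt' a b →
          ((α a).1 <+: (α b).1 ∧ ∀ mv ∈ (α b).1.drop (α a).1.length,
            (α a).1.getLast?.map Prod.fst ≠ some mv.1) := by
        intro a b hadj2 hlt2
        have hpre : W a <+: W b := hWprefix a b (Or.inl hlt2)
        refine ⟨hpre.map _, ?_⟩
        intro mv hmv
        have hlast? : (α a).1.getLast? = some (p a, a) := by
          rw [List.getLast?_eq_getLast (α a).2]
          exact congrArg some (hlastα a)
        rw [hlast?]
        rw [show (α a).1.length = (W a).length from List.length_map _,
          show (α b).1 = (W b).map (fun u => (p u, u)) from rfl, ← List.map_drop] at hmv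
        obtain ⟨xx, hxx, rfl⟩ := List.mem_map.1 hmv
        simp only [Option.map_some]
        intro hcon
        exact hfresh a b hadj2 hlt2 xx hxx (Option.some_injective _ hcon)
      rcases hcomp with h | h
      · exact Or.inl (main _ _ hadj (lt'_of_le' _ _ h hne))
      · exact Or.inr (main _ _ hadj' (lt'_of_le' _ _ h hne.symm))
  · change A.rel r (fun i => (lastP (α (x i))).2)
    have he : (fun i => (lastP (α (x i))).2) = x := funext (fun i => hcounit (x i))
    rw [he]
    exact hrel

end DecompToCoalg

section Final

variable {σ : Signature}

theorem trivial_decomp (A : Struct σ) [Fintype A.carrier] [Nonempty A.carrier] :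
    Nonempty (TreeDecomp A.carrier (gaifman A) (Fintype.card A.carrier - 1)) := by
  refine ⟨{
    T := Unit
    le := fun _ _ => True
    le_refl := fun _ => trivial
    le_antisymm := fun a b _ _ => rfl
    le_trans := fun _ _ _ _ _ => trivial
    pred_chain := fun _ _ _ _ _ => Or.inl trivial
    pred_finite := fun _ => Set.toFinite _
    root := ()
    root_le := fun _ => trivial
    label := fun _ => Set.univ
    td1 := fun v => ⟨(), Set.mem_univ v⟩
    td2 := fun v v' _ => ⟨(), Set.mem_univ v, Set.mem_univ v'⟩
    td3 := fun v _ _ _ _ _ _ _ => Set.mem_univ v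
    label_finite := fun _ => Set.finite_univ
    width := ?_ }⟩
  intro _
  rw [Set.ncard_univ, Nat.card_eq_fintype_card]
  have := Fintype.card_pos_iff.2 ‹Nonempty A.carrier›
  omega

end Final

/-- For every finite (nonempty) structure `A`, the tree-width of `A`
equals the pebbling coalgebra number of `A` minus 1. -/
theorem treeWidth_eq_pebCoalgNumber_sub_one
    (σ : Signature) (A : Struct σ) [Fintype A.carrier] [Nonempty A.carrier] :
    treeWidth A = pebCoalgNumber A - 1 := by
  have hSne : {w | Nonempty (TreeDecomp A.carrier (gaifman A) w)}.Nonempty :=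
    ⟨_, trivial_decomp A⟩
  have htw : Nonempty (TreeDecomp A.carrier (gaifman A) (treeWidth A)) :=
    Nat.sInf_mem hSne
  obtain ⟨D⟩ := htw
  obtain ⟨α, hα⟩ := decomp_to_coalg A (treeWidth A) D
  have hKne : {k | ∃ α : A.carrier → Peb A.carrier k, IsPebCoalg k A α}.Nonempty :=
    ⟨treeWidth A + 1, α, hα⟩
  have hκ : pebCoalgNumber A ∈
      {k | ∃ α : A.carrier → Peb A.carrier k, IsPebCoalg k A α} :=
    Nat.sInf_mem hKne
  obtain ⟨α', hα'⟩ := hκ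
  have h1 : pebCoalgNumber A ≤ treeWidth A + 1 := Nat.sInf_le ⟨α, hα⟩
  obtain ⟨D'⟩ := coalg_to_decomp A (pebCoalgNumber A) α' hα'
  have h2 : treeWidth A ≤ pebCoalgNumber A - 1 := Nat.sInf_le ⟨D'⟩
  have h3 : 1 ≤ pebCoalgNumber A := by
    obtain ⟨a⟩ := ‹Nonempty A.carrier›
    have := (lastP (α' a)).1.isLt
    omega
  omega
end

section
/- Let C_k be an indexed comonad on σ-structures (in co-Kleisli form) and W_{A,B} ⊆ C_k A × C_k B a set of winning positions, with C_k A carrying a tree structure (each non-root element s' has a unique immediate predecessor s, written s' ≻ s). Define S(A,B) as the set of functions f : C_k A → B such that (s, f*(s)) ∈ W_{A,B} for all s. Then: a pair (F,G) with F ⊆ S(A,B), G ⊆ S(B,A) is locally invertible (i.e., ∀f∈F, s. ∃g∈G. g* f* s = s, and ∀g∈G, t. ∃f∈F. f* g* t = t) with F nonempty, if and only if Duplicator has a winning strategy in the k-round back-and-forth C_k game between A and B (positions are pairs (s,t); from (s,t), Spoiler extends one coordinate by an immediate successor and Duplicator the other; Duplicator wins if after k rounds the position lies in W_{A,B}), provided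 W is compatible with the coextension operation as in the EF comonad. -/
/-- Winning positions for the EF back-and-forth game: a pair of equal-length sequences
whose induced relation is a partial isomorphism (single-valued and injective, and
preserving and reflecting all relations). -/
def Wpos {σ : Signature} (A B : Struct σ) (s : List A.carrier) (t : List B.carrier) : Prop :=
  ∃ h : s.length = t.length,
    (∀ i j : Fin s.length, s.get i = s.get j ↔ t.get (Fin.cast h i) = t.get (Fin.cast h j)) ∧
    (∀ (r : σ.symbols) (x : Fin (σ.arity r) → Fin s.length),
      A.rel r (fun i => s.get (x i)) ↔ B.rel r (fun i => t.get (Fin.cast h (x i))))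

/-- Duplicator wins the `n`-round back-and-forth game from position `(s, t)`:
in each round Spoiler extends one of the two sequences by an immediate successor
(i.e. appends one element) and Duplicator extends the other; after `n` rounds the
position must be a winning position. -/
def DWin {σ : Signature} (A B : Struct σ) : ℕ → List A.carrier → List B.carrier → Prop
  | 0, s, t => Wpos A B s t
  | n + 1, s, t => (∀ a, ∃ b, DWin A B n (s ++ [a]) (t ++ [b])) ∧
      (∀ b, ∃ a, DWin A B n (s ++ [a]) (t ++ [b]))

/-- `S(A,B)`: the set of functions `f : E_k A → B` such that every position
`(s, f*(s))` is winning. -/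
def Sset {σ : Signature} (k : ℕ) (A B : Struct σ) : Set (NESeq A.carrier k → B.carrier) :=
  {f | ∀ s : NESeq A.carrier k, Wpos A B s.1 (coext f s).1}

example (n : ℕ) (f : Fin n → ℕ) (i : ℕ) (h : i < n) : ((List.finRange n).map f).get ⟨i, by simp; omega⟩ = f ⟨i,h⟩ := by
  simp

lemma coext_len {A B : Type} {k : ℕ} (f : NESeq A k → B) (s : NESeq A k) :
    (coext f s).1.length = s.1.length := by simp [coext]

lemma coext_getElem {A B : Type} {k : ℕ} (f : NESeq A k → B) (s : NESeq A k)
    (i : ℕ) (hi : i < s.1.length) (hi' : i < (coext f s).1.length) :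
    (coext f s).1[i] = f ⟨s.1.take (i+1), by
      constructor
      · apply List.ne_nil_of_length_pos; simp [List.length_take]; omega
      · have := s.2.2; simp [List.length_take]; omega⟩ := by
  simp [coext]
lemma take_mem {A : Type} {k m : ℕ} (s : NESeq A k) (h1 : 1 ≤ m) (h2 : m ≤ s.1.length) :
    s.1.take m ≠ [] ∧ (s.1.take m).length ≤ k := by
  have := s.2.2
  constructor
  · apply List.ne_nil_of_length_pos; simp [List.length_take]; constructor <;> omega
  · simp [List.length_take]; omega

lemma snoc_mem {A : Type} {k : ℕ} (s : NESeq A k) (a : A) (h : s.1.length + 1 ≤ k) :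
    s.1 ++ [a] ≠ [] ∧ (s.1 ++ [a]).length ≤ k := by
  constructor
  · simp
  · simp; omega

lemma coext_take {A B : Type} {k : ℕ} (f : NESeq A k → B) (s : NESeq A k)
    (m : ℕ) (h1 : 1 ≤ m) (h2 : m ≤ s.1.length) :
    (coext f ⟨s.1.take m, take_mem s h1 h2⟩).1 = (coext f s).1.take m := by
  apply List.ext_getElem
  · rw [coext_len f ⟨s.1.take m, take_mem s h1 h2⟩]; simp [coext_len, List.length_take]
  · intro i hi hi'
    have hlen : (s.1.take m).length = m := by simp [List.length_take]; omega
    have hz := hi'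
    rw [List.length_take, coext_len] at hz
    have hi2 : i < s.1.length := by omega
    have him : i < m := by omega
    rw [List.getElem_take]
    rw [coext_getElem f ⟨s.1.take m, take_mem s h1 h2⟩ i (by show i < (s.1.take m).length; omega), coext_getElem f s i hi2 (by rwa [coext_len])]
    congr 1
    apply Subtype.ext
    show (s.1.take m).take (i+1) = s.1.take (i+1)
    rw [List.take_take, min_eq_left (by omega)]

lemma coext_snoc {A B : Type} {k : ℕ} (f : NESeq A k → B) (s : NESeq A k) (a : A)
    (h : s.1.length + 1 ≤ k) :
    (coext f ⟨s.1 ++ [a], snoc_mem s a h⟩).1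
      = (coext f s).1 ++ [f ⟨s.1 ++ [a], snoc_mem s a h⟩] := by
  apply List.ext_getElem
  · rw [coext_len f ⟨s.1 ++ [a], snoc_mem s a h⟩]; simp [coext_len]
  · intro i hi hi'
    erw [coext_len] at hi
    have hi0 : i < s.1.length + 1 := by simpa using hi
    rw [coext_getElem f ⟨s.1 ++ [a], snoc_mem s a h⟩ i (by simpa using hi)]
    rcases Nat.lt_or_ge i s.1.length with hlt | hge
    · rw [List.getElem_append_left (by rw [coext_len]; omega)]
      rw [coext_getElem f s i hlt (by rwa [coext_len])]
      congr 1
      apply Subtype.ext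
      simp
      omega
    · have hie : i = s.1.length := by omega
      subst hie
      rw [List.getElem_append_right (le_of_eq (coext_len f s))]
      simp only [coext_len, Nat.sub_self, List.getElem_singleton]
      congr 1
      apply Subtype.ext
      show (s.1 ++ [a]).take (s.1.length + 1) = s.1 ++ [a]
      apply List.take_of_length_le
      simp
lemma coext_singleton {A B : Type} {k : ℕ} (f : NESeq A k → B) (a : A)
    (h : ([a] : List A) ≠ [] ∧ ([a] : List A).length ≤ k) :
    (coext f ⟨[a], h⟩).1 = [f ⟨[a], h⟩] := by
  apply List.ext_getElem
  · erw [coext_len]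
  · intro i hi hi'
    erw [coext_len] at hi
    simp only [List.length_singleton] at hi
    interval_cases i
    rw [coext_getElem f ⟨[a], h⟩ 0 (by simp)]
    simp

lemma wpos_swap {σ : Signature} {A B : Struct σ} {s : List A.carrier} {t : List B.carrier}
    (h : Wpos A B s t) : Wpos B A t s := by
  obtain ⟨hl, h1, h2⟩ := h
  refine ⟨hl.symm, ?_, ?_⟩
  · intro i j
    have := h1 (Fin.cast hl.symm i) (Fin.cast hl.symm j)
    simpa using this.symm
  · intro r x
    have := h2 r (fun i => Fin.cast hl.symm (x i))
    simpa using this.symm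

lemma wpos_prefix {σ : Signature} {A B : Struct σ} {s u : List A.carrier}
    {t v : List B.carrier} (h : Wpos A B (s ++ u) (t ++ v)) (hl : s.length = t.length) :
    Wpos A B s t := by
  obtain ⟨hlen, h1, h2⟩ := h
  refine ⟨hl, ?_, ?_⟩
  · intro i j
    have e : ∀ i : Fin s.length, (s ++ u).get ⟨i.1, by simp; omega⟩ = s.get i := by
      intro i
      simp [List.getElem_append_left]
    have e2 : ∀ i : Fin s.length,
        (t ++ v).get (Fin.cast hlen ⟨i.1, by simp; omega⟩) = t.get (Fin.cast hl i) := by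
      intro i
      have : i.1 < t.length := by omega
      simp [List.getElem_append_left, this]
    have := h1 ⟨i.1, by simp; omega⟩ ⟨j.1, by simp; omega⟩
    rwa [e i, e j, e2 i, e2 j] at this
  · intro r x
    have e : ∀ i : Fin s.length, (s ++ u).get ⟨i.1, by simp; omega⟩ = s.get i := by
      intro i
      simp [List.getElem_append_left]
    have e2 : ∀ i : Fin s.length,
        (t ++ v).get (Fin.cast hlen ⟨i.1, by simp; omega⟩) = t.get (Fin.cast hl i) := by
      intro i
      have : i.1 < t.length := by omega
      simp [List.getElem_append_left, this]
    have := h2 r (fun i => ⟨(x i).1, by simp; omega⟩)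
    simp only [e, e2] at this
    exact this

lemma dwin_swap {σ : Signature} {A B : Struct σ} :
    ∀ {n : ℕ} {s : List A.carrier} {t : List B.carrier},
      DWin A B n s t → DWin B A n t s := by
  intro n
  induction n with
  | zero => intro s t h; exact wpos_swap h
  | succ n ih =>
    intro s t h
    exact ⟨fun b => (h.2 b).imp (fun a ha => ih ha), fun a => (h.1 a).imp (fun b hb => ih hb)⟩

lemma dwin_wpos {σ : Signature} {A B : Struct σ} [Nonempty A.carrier] :
    ∀ {n : ℕ} {s : List A.carrier} {t : List B.carrier}, DWin A B n s t → Wpos A B s t := by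
  intro n
  induction n with
  | zero => intro s t h; exact h
  | succ n ih =>
    intro s t h
    obtain ⟨b, hb⟩ := h.1 (Classical.arbitrary _)
    have hw := ih hb
    apply wpos_prefix hw
    have := hw.1
    simp at this
    omega
open Classical in
/-- The response play function: plays along `s₀` against prefixes of `t₀`, and
otherwise follows an ε-chosen Duplicator strategy. -/
noncomputable def play {σ : Signature} (k : ℕ) (X Y : Struct σ) [Nonempty X.carrier]
    (s₀ : List X.carrier) (t₀ : List Y.carrier) : List Y.carrier → List X.carrier
  | [] => []
  | (b :: bs) =>
    if (b :: bs) <+: t₀ then s₀.take (b :: bs).length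
    else
      play k X Y s₀ t₀ (b :: bs).dropLast ++
        [Classical.epsilon fun a =>
          DWin X Y (k - (b :: bs).length)
            (play k X Y s₀ t₀ (b :: bs).dropLast ++ [a]) (b :: bs)]
  termination_by l => l.length
  decreasing_by all_goals simp

lemma play_nil {σ : Signature} (k : ℕ) (X Y : Struct σ) [Nonempty X.carrier]
    (s₀ : List X.carrier) (t₀ : List Y.carrier) : play k X Y s₀ t₀ [] = [] := by
  simp [play]
open Classical in
lemma play_eq {σ : Signature} (k : ℕ) (X Y : Struct σ) [Nonempty X.carrier]
    (s₀ : List X.carrier) (t₀ : List Y.carrier) (l : List Y.carrier) (h : l ≠ []) :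
    play k X Y s₀ t₀ l =
      if l <+: t₀ then s₀.take l.length
      else
        play k X Y s₀ t₀ l.dropLast ++
          [Classical.epsilon fun a =>
            DWin X Y (k - l.length) (play k X Y s₀ t₀ l.dropLast ++ [a]) l] := by
  cases l with
  | nil => exact absurd rfl h
  | cons b bs => rw [play]

lemma play_length {σ : Signature} (k : ℕ) (X Y : Struct σ) [Nonempty X.carrier]
    (s₀ : List X.carrier) (t₀ : List Y.carrier) (hls : t₀.length ≤ s₀.length) :
    ∀ l : List Y.carrier, (play k X Y s₀ t₀ l).length = l.length := by
  intro l
  induction l using List.reverseRecOn with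
  | nil => simp [play_nil]
  | append_singleton l b ih =>
    rw [play_eq k X Y s₀ t₀ _ (by simp)]
    split_ifs with hp
    · have := hp.length_le
      simp at this ⊢
      omega
    · rw [List.dropLast_concat]
      simp [ih]

lemma play_prescribed {σ : Signature} (k : ℕ) (X Y : Struct σ) [Nonempty X.carrier]
    (s₀ : List X.carrier) (t₀ : List Y.carrier)
    (i : ℕ) (hi : i ≤ t₀.length) :
    play k X Y s₀ t₀ (t₀.take i) = s₀.take i := by
  rcases Nat.eq_zero_or_pos i with rfl | hpos
  · simp [play_nil]
  · rcases List.eq_nil_or_concat' (t₀.take i) with h | ⟨l', b', h⟩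
    · have : (t₀.take i).length = i := by simp; omega
      rw [h] at this
      simp at this
      omega
    · rw [play_eq k X Y s₀ t₀ _ (by rw [h]; simp)]
      rw [if_pos (List.take_prefix i t₀)]
      congr 1
      simp
      omega

lemma play_take {σ : Signature} (k : ℕ) (X Y : Struct σ) [Nonempty X.carrier]
    (s₀ : List X.carrier) (t₀ : List Y.carrier) (hls : t₀.length ≤ s₀.length) :
    ∀ (l : List Y.carrier) (m : ℕ),
      play k X Y s₀ t₀ (l.take m) = (play k X Y s₀ t₀ l).take m := by
  intro l
  induction l using List.reverseRecOn with
  | nil => simp [play_nil]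
  | append_singleton l b ih =>
    intro m
    rcases Nat.lt_or_ge m (l ++ [b]).length with hm | hm
    · have hm' : m ≤ l.length := by simp at hm; omega
      rw [List.take_append_of_le_length hm']
      rw [play_eq k X Y s₀ t₀ (l ++ [b]) (by simp)]
      split_ifs with hp
      · -- l ++ [b] is a prefix of t₀, so l.take m is too
        have h1 : (l ++ [b]).take m <+: t₀ := (List.take_prefix _ _).trans hp
        rw [List.take_append_of_le_length hm'] at h1
        have h2 : play k X Y s₀ t₀ (l.take m) = s₀.take m := by
          have := hp.length_le
          have h3 : l.take m = t₀.take m := by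
            rw [List.prefix_iff_eq_take.mp h1]
            congr 1
            simp
            omega
          rw [h3, play_prescribed k X Y s₀ t₀ m (by simp at this; omega)]
        rw [h2, List.take_take]
        congr 1
        simp
        omega
      · rw [List.dropLast_concat]
        rw [List.take_append_of_le_length (by rw [play_length k X Y s₀ t₀ hls]; omega)]
        rw [← ih m]
    · have h1 : (l ++ [b]).take m = l ++ [b] := List.take_of_length_le hm
      have h2 : ((play k X Y s₀ t₀ (l ++ [b]))).take m = play k X Y s₀ t₀ (l ++ [b]) :=
        List.take_of_length_le (by rw [play_length k X Y s₀ t₀ hls]; omega)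
      rw [h1, h2]

lemma play_invariant {σ : Signature} (k : ℕ) (X Y : Struct σ) [Nonempty X.carrier]
    (s₀ : List X.carrier) (t₀ : List Y.carrier) (hls : s₀.length = t₀.length)
    (hbase : ∀ i ≤ t₀.length, DWin X Y (k - i) (s₀.take i) (t₀.take i)) :
    ∀ l : List Y.carrier, l.length ≤ k → DWin X Y (k - l.length) (play k X Y s₀ t₀ l) l := by
  intro l
  induction l using List.reverseRecOn with
  | nil =>
    intro _
    have := hbase 0 (by omega)
    simpa [play_nil] using this
  | append_singleton l b ih =>
    intro hlk
    rw [play_eq k X Y s₀ t₀ (l ++ [b]) (by simp)]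
    split_ifs with hp
    · have hlen := hp.length_le
      have h1 : l ++ [b] = t₀.take (l ++ [b]).length := List.prefix_iff_eq_take.mp hp
      have := hbase (l ++ [b]).length hlen
      rw [← h1] at this
      exact this
    · rw [List.dropLast_concat]
      have hlen : l.length + 1 ≤ k := by simpa using hlk
      have hd : DWin X Y (k - l.length) (play k X Y s₀ t₀ l) l := ih (by omega)
      have harith : k - l.length = (k - (l ++ [b]).length) + 1 := by simp; omega
      rw [harith] at hd
      have hex : ∃ a, DWin X Y (k - (l ++ [b]).length)
          (play k X Y s₀ t₀ l ++ [a]) (l ++ [b]) := hd.2 b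
      have := Classical.epsilon_spec hex
      convert this using 3 <;> rw [List.dropLast_concat]
lemma coext_play {σ : Signature} {k : ℕ} (X Y : Struct σ) [Nonempty X.carrier]
    (s₀ : List X.carrier) (t₀ : List Y.carrier) (hls : t₀.length ≤ s₀.length)
    (f : NESeq Y.carrier k → X.carrier)
    (hf : ∀ (t : NESeq Y.carrier k) (h : play k X Y s₀ t₀ t.1 ≠ []),
      f t = (play k X Y s₀ t₀ t.1).getLast h) :
    ∀ t : NESeq Y.carrier k, (coext f t).1 = play k X Y s₀ t₀ t.1 := by
  intro t
  apply List.ext_getElem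
  · rw [coext_len, play_length k X Y s₀ t₀ hls]
  · intro i hi hi'
    rw [coext_len] at hi
    rw [play_length k X Y s₀ t₀ hls] at hi'
    rw [coext_getElem f t i hi]
    have hne : play k X Y s₀ t₀ (t.1.take (i+1)) ≠ [] := by
      apply List.ne_nil_of_length_pos
      rw [play_length k X Y s₀ t₀ hls]
      simp [List.length_take]
      omega
    refine (hf ⟨t.1.take (i+1), take_mem t (by omega) (by omega)⟩ hne).trans ?_
    rw [List.getLast_eq_getElem]
    have hpt : play k X Y s₀ t₀ (t.1.take (i+1)) = (play k X Y s₀ t₀ t.1).take (i+1) :=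
      play_take k X Y s₀ t₀ hls t.1 (i+1)
    have hlen2 : (play k X Y s₀ t₀ (t.1.take (i+1))).length = i + 1 := by
      rw [play_length k X Y s₀ t₀ hls]
      simp [List.length_take]
      omega
    have : ∀ (L : List X.carrier) (hL : L = (play k X Y s₀ t₀ t.1).take (i+1))
        (hl2 : L.length = i + 1) (hj : L.length - 1 < L.length),
        L[L.length - 1]'hj = (play k X Y s₀ t₀ t.1)[i]'(by rwa [play_length k X Y s₀ t₀ hls]) := by
      intro L hL hl2 hj
      subst hL
      simp only [hl2]
      rw [List.getElem_take]
      simp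
    exact this _ hpt hlen2 _
/-- The set of strategy-consistent functions. -/
def FSet {σ : Signature} (k : ℕ) (X Y : Struct σ) : Set (NESeq X.carrier k → Y.carrier) :=
  {f | ∀ s : NESeq X.carrier k, DWin X Y (k - s.1.length) s.1 (coext f s).1}

lemma exists_response {σ : Signature} {k : ℕ} (X Y : Struct σ) [Nonempty X.carrier]
    (s₀ : List X.carrier) (t₀ : List Y.carrier) (hls : s₀.length = t₀.length)
    (hbase : ∀ i ≤ t₀.length, DWin X Y (k - i) (s₀.take i) (t₀.take i)) :
    ∃ g : NESeq Y.carrier k → X.carrier, g ∈ FSet k Y X ∧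
      ∀ t : NESeq Y.carrier k, t.1 = t₀ → (coext g t).1 = s₀ := by
  have hls' : t₀.length ≤ s₀.length := by omega
  have hne : ∀ t : NESeq Y.carrier k, play k X Y s₀ t₀ t.1 ≠ [] := by
    intro t
    apply List.ne_nil_of_length_pos
    rw [play_length k X Y s₀ t₀ hls']
    have := t.2.1
    simpa [List.length_pos_iff] using this
  have hc := coext_play X Y s₀ t₀ hls'
    (fun t => (play k X Y s₀ t₀ t.1).getLast (hne t)) (fun t h => rfl)
  refine ⟨fun t => (play k X Y s₀ t₀ t.1).getLast (hne t), ?_, ?_⟩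
  · intro t
    rw [hc t]
    exact dwin_swap (play_invariant k X Y s₀ t₀ hls hbase t.1 t.2.2)
  · intro t ht
    rw [hc t, ht]
    have := play_prescribed k X Y s₀ t₀ t₀.length (le_refl _)
    rw [List.take_length] at this
    rw [this, ← hls, List.take_length]

lemma FSet_sub_Sset {σ : Signature} {k : ℕ} (X Y : Struct σ) [Nonempty X.carrier] :
    FSet k X Y ⊆ Sset k X Y := by
  intro f hf s
  exact dwin_wpos (hf s)

lemma FSet_nonempty {σ : Signature} {k : ℕ} (X Y : Struct σ) [Nonempty X.carrier]
    [Nonempty Y.carrier] (hw : DWin X Y k [] []) : (FSet k X Y).Nonempty := by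
  obtain ⟨g, hg, -⟩ := exists_response Y X ([] : List Y.carrier) ([] : List X.carrier)
    rfl (by intro i hi; simp at hi; subst hi; simpa using dwin_swap hw)
  exact ⟨g, hg⟩

lemma FSet_locInv {σ : Signature} {k : ℕ} (X Y : Struct σ) [Nonempty X.carrier]
    [Nonempty Y.carrier] (hw : DWin X Y k [] []) :
    ∀ f ∈ FSet k X Y, ∀ s : NESeq X.carrier k, ∃ g ∈ FSet k Y X,
      coext g (coext f s) = s := by
  intro f hf s
  have hbase : ∀ i ≤ (coext f s).1.length,
      DWin X Y (k - i) (s.1.take i) ((coext f s).1.take i) := by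
    intro i hi
    rw [coext_len] at hi
    rcases Nat.eq_zero_or_pos i with rfl | hpos
    · simpa using hw
    · have hmem := take_mem s hpos hi
      have := hf ⟨s.1.take i, hmem⟩
      rw [coext_take f s i hpos hi] at this
      have hl : (s.1.take i).length = i := by simp [List.length_take]; omega
      rwa [hl] at this
  obtain ⟨g, hg, hgs⟩ := exists_response X Y s.1 (coext f s).1 (coext_len f s).symm hbase
  refine ⟨g, hg, ?_⟩
  apply Subtype.ext
  exact hgs (coext f s) rfl
lemma dwin_of_pair {σ : Signature} {k : ℕ} (A B : Struct σ)
    (F : Set (NESeq A.carrier k → B.carrier)) (G : Set (NESeq B.carrier k → A.carrier))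
    (hF : F ⊆ Sset k A B) (hG : G ⊆ Sset k B A)
    (h1 : ∀ f ∈ F, ∀ s : NESeq A.carrier k, ∃ g ∈ G, coext g (coext f s) = s)
    (h2 : ∀ g ∈ G, ∀ t : NESeq B.carrier k, ∃ f ∈ F, coext f (coext g t) = t) :
    ∀ (n : ℕ) (s : NESeq A.carrier k) (t : NESeq B.carrier k),
      s.1.length + n ≤ k →
      ((∃ f ∈ F, coext f s = t) ∨ (∃ g ∈ G, coext g t = s)) →
      DWin A B n s.1 t.1 := by
  intro n
  induction n with
  | zero =>
    intro s t _ hw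
    rcases hw with ⟨f, hf, hfs⟩ | ⟨g, hg, hgt⟩
    · have := hF hf s
      rwa [hfs] at this
    · have := hG hg t
      rw [hgt] at this
      exact wpos_swap this
  | succ n ih =>
    intro s t hlen hw
    have hlt : t.1.length = s.1.length := by
      rcases hw with ⟨f, hf, hfs⟩ | ⟨g, hg, hgt⟩
      · rw [← hfs, coext_len]
      · rw [← hgt, coext_len]
    have hsk : s.1.length + 1 ≤ k := by omega
    have htk : t.1.length + 1 ≤ k := by omega
    constructor
    · -- Spoiler plays a ∈ A
      intro a
      -- normalize witness to f-form
      have hwf : ∃ f ∈ F, coext f s = t := by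
        rcases hw with hw | ⟨g, hg, hgt⟩
        · exact hw
        · obtain ⟨f, hf, hft⟩ := h2 g hg t
          rw [hgt] at hft
          exact ⟨f, hf, hft⟩
      obtain ⟨f, hf, hfs⟩ := hwf
      set s' : NESeq A.carrier k := ⟨s.1 ++ [a], snoc_mem s a hsk⟩ with hs'
      refine ⟨f s', ?_⟩
      have hsnoc := coext_snoc f s a hsk
      have : coext f s' = ⟨t.1 ++ [f s'], snoc_mem t (f s') htk⟩ := by
        apply Subtype.ext
        show (coext f s').1 = t.1 ++ [f s']
        rw [hs', hsnoc, ← hfs]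
      have := ih s' ⟨t.1 ++ [f s'], snoc_mem t (f s') htk⟩
        (by simp [hs']; omega) (Or.inl ⟨f, hf, this⟩)
      simpa [hs'] using this
    · -- Spoiler plays b ∈ B
      intro b
      have hwg : ∃ g ∈ G, coext g t = s := by
        rcases hw with ⟨f, hf, hfs⟩ | hw
        · obtain ⟨g, hg, hgs⟩ := h1 f hf s
          rw [hfs] at hgs
          exact ⟨g, hg, hgs⟩
        · exact hw
      obtain ⟨g, hg, hgt⟩ := hwg
      set t' : NESeq B.carrier k := ⟨t.1 ++ [b], snoc_mem t b htk⟩ with ht'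
      refine ⟨g t', ?_⟩
      have hsnoc := coext_snoc g t b htk
      have : coext g t' = ⟨s.1 ++ [g t'], snoc_mem s (g t') hsk⟩ := by
        apply Subtype.ext
        show (coext g t').1 = s.1 ++ [g t']
        rw [ht', hsnoc, ← hgt]
      have := ih ⟨s.1 ++ [g t'], snoc_mem s (g t') hsk⟩ t'
        (by simp; omega) (Or.inr ⟨g, hg, this⟩)
      simpa [ht'] using this
/-- For the EF comonad `E_k` with winning positions given by partial
isomorphisms, there is a nonempty locally invertible pair `(F, G)` with `F ⊆ S(A,B)`,
`G ⊆ S(B,A)` iff Duplicator has a winning strategy in the `k`-round back-and-forth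
game between `A` and `B`. -/
theorem locallyInvertiblePair_iff_backAndForth
    (σ : Signature) (k : ℕ) (hk : 0 < k) (A B : Struct σ)
    [Nonempty A.carrier] [Nonempty B.carrier] :
    (∃ (F : Set (NESeq A.carrier k → B.carrier)) (G : Set (NESeq B.carrier k → A.carrier)),
      F.Nonempty ∧ F ⊆ Sset k A B ∧ G ⊆ Sset k B A ∧
      (∀ f ∈ F, ∀ s : NESeq A.carrier k, ∃ g ∈ G, coext g (coext f s) = s) ∧
      (∀ g ∈ G, ∀ t : NESeq B.carrier k, ∃ f ∈ F, coext f (coext g t) = t)) ↔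
    DWin A B k [] [] := by
  constructor
  · rintro ⟨F, G, ⟨f₀, hf₀⟩, hF, hG, h1, h2⟩
    obtain ⟨m, rfl⟩ : ∃ m, k = m + 1 := ⟨k - 1, by omega⟩
    constructor
    · intro a
      have hmem : ([a] : List A.carrier) ≠ [] ∧ ([a] : List A.carrier).length ≤ m + 1 := by
        constructor
        · simp
        · simp
      set s : NESeq A.carrier (m+1) := ⟨[a], hmem⟩ with hs
      refine ⟨f₀ s, ?_⟩
      have hc : coext f₀ s = ⟨[f₀ s], by constructor <;> simp⟩ := by
        apply Subtype.ext
        exact coext_singleton f₀ a hmem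
      have := dwin_of_pair A B F G hF hG h1 h2 m s ⟨[f₀ s], by constructor <;> simp⟩
        (by simp [hs]; omega) (Or.inl ⟨f₀, hf₀, hc⟩)
      simpa [hs] using this
    · intro b
      have hmemb : ([b] : List B.carrier) ≠ [] ∧ ([b] : List B.carrier).length ≤ m + 1 := by
        constructor <;> simp
      set t : NESeq B.carrier (m+1) := ⟨[b], hmemb⟩ with ht
      obtain ⟨g, hg, -⟩ := h1 f₀ hf₀ ⟨[Classical.arbitrary A.carrier], by constructor <;> simp⟩
      refine ⟨g t, ?_⟩
      have hc : coext g t = ⟨[g t], by constructor <;> simp⟩ := by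
        apply Subtype.ext
        exact coext_singleton g b hmemb
      have := dwin_of_pair A B F G hF hG h1 h2 m ⟨[g t], by constructor <;> simp⟩ t
        (by simp; omega) (Or.inr ⟨g, hg, hc⟩)
      simpa [ht] using this
  · intro hw
    refine ⟨FSet k A B, FSet k B A, FSet_nonempty A B hw, FSet_sub_Sset A B,
      FSet_sub_Sset B A, FSet_locInv A B hw, FSet_locInv B A (dwin_swap hw)⟩
end
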